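/- Let E₀ ≥ 0, T ≥ 0 and δ > 0, and let f, g : [0,∞) → ℝ be nonincreasing with 0 ≤ f(t) ≤ E₀ and 0 ≤ g(t) ≤ E₀ for all t. Suppose f(t) = g(t) for all t ∈ [0,T] and g(t) < f(t) for all t ∈ (T, T+δ). Then there exists λ̄ > 0 such that for every λ ≥ λ̄, ∫₀^∞ exp(−λt)·g(t) dt < ∫₀^∞ exp(−λt)·f(t) dt. -/

import Mathlib

open MeasureTheory

private lemma integral_exp_neg_mul_Ioi {b : ℝ} (hb : 0 < b) (a : ℝ) :
    ∫ x in Set.Ioi a, Real.exp (-b * x) = Real.exp (-b * a) / b := by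
  have hderiv : ∀ x ∈ Set.Ici a,
      HasDerivAt (fun x => -Real.exp (-b * x) / b) (Real.exp (-b * x)) x := by
    intro x _
    have h := (((hasDerivAt_id x).const_mul (-b)).exp.neg).div_const b
    refine h.congr_deriv ?_
    simp only [id, mul_one]
    field_simp
  have htend : Filter.Tendsto (fun x => -Real.exp (-b * x) / b) Filter.atTop (nhds 0) := by
    have : Filter.Tendsto (fun x : ℝ => Real.exp (-b * x)) Filter.atTop (nhds 0) :=
      Real.tendsto_exp_atBot.comp (Filter.tendsto_id.const_mul_atTop_of_neg (by linarith))
    simpa using (this.neg.div_const b)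
  have := integral_Ioi_of_hasDerivAt_of_tendsto' hderiv (exp_neg_integrableOn_Ioi a hb) htend
  rw [this]; ring

/-- Inequality (IN): if two nonincreasing energy profiles with values in `[0, E₀]` agree on
`[0,T]` and `g < f` on `(T, T+δ)`, then the Laplace transform of `g` is strictly smaller
than that of `f` for all sufficiently large `λ`. -/
theorem laplace_strict_comparison (E₀ : ℝ) (hE₀ : 0 ≤ E₀)
    (T : ℝ) (hT : 0 ≤ T) (δ : ℝ) (hδ : 0 < δ)
    (f g : ℝ → ℝ)
    (hf_mono : AntitoneOn f (Set.Ici 0)) (hg_mono : AntitoneOn g (Set.Ici 0))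
    (hf_bd : ∀ t, 0 ≤ t → 0 ≤ f t ∧ f t ≤ E₀)
    (hg_bd : ∀ t, 0 ≤ t → 0 ≤ g t ∧ g t ≤ E₀)
    (heq : ∀ t, 0 ≤ t → t ≤ T → f t = g t)
    (hlt : ∀ t, T < t → t < T + δ → g t < f t) :
    ∃ lam₀ > (0:ℝ), ∀ lam, lam₀ ≤ lam →
      (∫ t in Set.Ici (0:ℝ), Real.exp (-lam * t) * g t)
        < ∫ t in Set.Ici (0:ℝ), Real.exp (-lam * t) * f t := by
  classical
  set b : ℝ := T + δ / 2 with hb_def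
  have hTb : T < b := by simp [hb_def]; linarith
  have hb0 : 0 ≤ b := by linarith
  have hbδ : b < T + δ := by simp [hb_def]; linarith
  -- measurability of f and g on [0,∞)
  have hf_m : AEMeasurable f (volume.restrict (Set.Ici (0:ℝ))) :=
    aemeasurable_restrict_of_antitoneOn measurableSet_Ici hf_mono
  have hg_m : AEMeasurable g (volume.restrict (Set.Ici (0:ℝ))) :=
    aemeasurable_restrict_of_antitoneOn measurableSet_Ici hg_mono
  have hfg_m : AEMeasurable (fun t => f t - g t) (volume.restrict (Set.Ici (0:ℝ))) :=
    hf_m.sub hg_m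
  -- f - g is integrable on Ioc T b
  have hsub : Set.Ioc T b ⊆ Set.Ici (0:ℝ) := fun t ht => le_of_lt (lt_of_le_of_lt hT ht.1)
  have hfg_int : IntegrableOn (fun t => f t - g t) (Set.Ioc T b) := by
    refine Integrable.mono (g := fun _ => E₀) (integrableOn_const ?_) ?_ ?_
    · simp [Real.volume_Ioc]
    · exact (hfg_m.mono_measure (Measure.restrict_mono hsub le_rfl)).aestronglyMeasurable
    · filter_upwards [ae_restrict_mem measurableSet_Ioc] with t ht
      have h0t : 0 ≤ t := le_of_lt (lt_of_le_of_lt hT ht.1)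
      have h1 := hf_bd t h0t; have h2 := hg_bd t h0t
      rw [Real.norm_eq_abs, Real.norm_eq_abs, abs_of_nonneg hE₀, abs_le]
      constructor <;> linarith
  set m : ℝ := ∫ t in Set.Ioc T b, (f t - g t) with hm_def
  have hm_pos : 0 < m := by
    have hnn : 0 ≤ᵐ[volume.restrict (Set.Ioc T b)] (fun t => f t - g t) := by
      filter_upwards [ae_restrict_mem measurableSet_Ioc] with t ht
      have := hlt t ht.1 (lt_of_le_of_lt ht.2 hbδ)
      simp only [Pi.zero_apply]; linarith
    rw [hm_def, setIntegral_pos_iff_support_of_nonneg_ae hnn hfg_int]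
    have hss : Set.Ioc T b ⊆ Function.support (fun t => f t - g t) := by
      intro t ht
      have := hlt t ht.1 (lt_of_le_of_lt ht.2 hbδ)
      simp only [Function.mem_support]; intro h; linarith
    rw [Set.inter_eq_self_of_subset_right hss, Real.volume_Ioc]
    simp; linarith
  refine ⟨max 1 (E₀ / m + 1), lt_of_lt_of_le one_pos (le_max_left _ _), ?_⟩
  intro lam hlam
  have hlam1 : (1:ℝ) ≤ lam := le_trans (le_max_left _ _) hlam
  have hlam0 : 0 < lam := lt_of_lt_of_le one_pos hlam1
  have hlamE : E₀ / lam < m := by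
    have h1 : E₀ / m < lam := by
      have := le_trans (le_max_right 1 (E₀ / m + 1)) hlam; linarith
    have h2 : E₀ < lam * m := by
      have := (div_lt_iff₀ hm_pos).1 h1; linarith
    exact (div_lt_iff₀ hlam0).2 (by linarith)
  -- integrability of exp(-λt)*f and exp(-λt)*g on Ici 0
  have key_int : ∀ (h : ℝ → ℝ), AEMeasurable h (volume.restrict (Set.Ici (0:ℝ))) →
      (∀ t, 0 ≤ t → 0 ≤ h t ∧ h t ≤ E₀) →
      IntegrableOn (fun t => Real.exp (-lam * t) * h t) (Set.Ici (0:ℝ)) := by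
    intro h hm hbd
    refine Integrable.mono (g := fun t => E₀ * Real.exp (-lam * t)) ?_ ?_ ?_
    · exact ((integrableOn_Ici_iff_integrableOn_Ioi).2
        (exp_neg_integrableOn_Ioi 0 hlam0)).const_mul E₀
    · exact ((Real.continuous_exp.comp (continuous_const.mul continuous_id)).aemeasurable.restrict.mul
        hm).aestronglyMeasurable
    · filter_upwards [ae_restrict_mem measurableSet_Ici] with t ht
      have h1 := hbd t ht
      have he : 0 < Real.exp (-lam * t) := Real.exp_pos _
      rw [Real.norm_eq_abs, Real.norm_eq_abs, abs_mul, abs_of_pos he,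
        abs_of_nonneg h1.1, abs_of_nonneg (by positivity : (0:ℝ) ≤ E₀ * Real.exp (-lam * t))]
      calc Real.exp (-lam * t) * h t ≤ Real.exp (-lam * t) * E₀ := by
            exact mul_le_mul_of_nonneg_left h1.2 he.le
        _ = E₀ * Real.exp (-lam * t) := mul_comm _ _
  have hF_int := key_int f hf_m hf_bd
  have hG_int := key_int g hg_m hg_bd
  rw [← sub_pos, ← integral_sub hF_int hG_int]
  have hsimp : (fun t => Real.exp (-lam * t) * f t - Real.exp (-lam * t) * g t)
      = fun t => Real.exp (-lam * t) * (f t - g t) := by funext t; ring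
  rw [hsimp]
  set φ : ℝ → ℝ := fun t => Real.exp (-lam * t) * (f t - g t) with hφ
  have hφ_int : IntegrableOn φ (Set.Ici (0:ℝ)) := by
    have h2 := hF_int.sub hG_int
    have he : ((fun t => Real.exp (-lam * t) * f t) - fun t => Real.exp (-lam * t) * g t) = φ := by
      funext t; simp only [hφ, Pi.sub_apply]; ring
    rwa [he] at h2
  -- decompose Ici 0 = Ioc 0 T ∪ Ioc T b ∪ Ioi b (up to measure zero)
  have hIci : ∫ t in Set.Ici (0:ℝ), φ t = ∫ t in Set.Ioi (0:ℝ), φ t :=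
    integral_Ici_eq_integral_Ioi
  have hunion1 : Set.Ioi (0:ℝ) = Set.Ioc 0 T ∪ Set.Ioc T b ∪ Set.Ioi b := by
    rw [Set.Ioc_union_Ioc_eq_Ioc hT (le_of_lt hTb), Set.Ioc_union_Ioi_eq_Ioi hb0]
  have hI1 : IntegrableOn φ (Set.Ioc (0:ℝ) T) :=
    hφ_int.mono_set (fun t ht => le_of_lt ht.1)
  have hI2 : IntegrableOn φ (Set.Ioc T b) := hφ_int.mono_set hsub
  have hI3 : IntegrableOn φ (Set.Ioi b) :=
    hφ_int.mono_set (fun t ht => le_trans hb0 (le_of_lt ht))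
  have hsplit : ∫ t in Set.Ioi (0:ℝ), φ t
      = (∫ t in Set.Ioc (0:ℝ) T, φ t) + (∫ t in Set.Ioc T b, φ t) + ∫ t in Set.Ioi b, φ t := by
    have hd1 : Disjoint (Set.Ioc (0:ℝ) T ∪ Set.Ioc T b) (Set.Ioi b) := by
      rw [Set.disjoint_union_left]
      exact ⟨Set.Ioc_disjoint_Ioi (le_of_lt hTb), Set.Ioc_disjoint_Ioi_same⟩
    rw [hunion1, setIntegral_union hd1 measurableSet_Ioi (hI1.union hI2) hI3,
      setIntegral_union (Set.Ioc_disjoint_Ioc_of_le le_rfl) measurableSet_Ioc hI1 hI2]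
  -- piece 1 is zero
  have hp1 : ∫ t in Set.Ioc (0:ℝ) T, φ t = 0 := by
    rw [setIntegral_congr_fun measurableSet_Ioc
      (g := fun _ => (0:ℝ)) (fun t ht => by
        simp only [hφ]
        rw [heq t (le_of_lt ht.1) ht.2]; ring)]
    simp
  -- piece 2 lower bound
  have hp2 : Real.exp (-lam * b) * m ≤ ∫ t in Set.Ioc T b, φ t := by
    have hmono : ∀ t ∈ Set.Ioc T b,
        Real.exp (-lam * b) * (f t - g t) ≤ φ t := by
      intro t ht
      have hfg : 0 ≤ f t - g t := by
        have := hlt t ht.1 (lt_of_le_of_lt ht.2 hbδ); linarith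
      have hexp : Real.exp (-lam * b) ≤ Real.exp (-lam * t) := by
        apply Real.exp_le_exp.2
        have : t ≤ b := ht.2
        nlinarith
      exact mul_le_mul_of_nonneg_right hexp hfg
    have := setIntegral_mono_on (hfg_int.const_mul _) hI2 measurableSet_Ioc hmono
    calc Real.exp (-lam * b) * m
        = ∫ t in Set.Ioc T b, Real.exp (-lam * b) * (f t - g t) := by
          rw [hm_def, integral_const_mul]
      _ ≤ ∫ t in Set.Ioc T b, φ t := this
  -- piece 3 lower bound
  have hIexp : IntegrableOn (fun t => Real.exp (-lam * t)) (Set.Ioi b) :=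
    exp_neg_integrableOn_Ioi b hlam0
  have hp3 : -(E₀ * (Real.exp (-lam * b) / lam)) ≤ ∫ t in Set.Ioi b, φ t := by
    have hmono : ∀ t ∈ Set.Ioi b,
        -(E₀ * Real.exp (-lam * t)) ≤ φ t := by
      intro t ht
      have h0t : 0 ≤ t := le_trans hb0 (le_of_lt ht)
      have h1 := hf_bd t h0t; have h2 := hg_bd t h0t
      have he : 0 < Real.exp (-lam * t) := Real.exp_pos _
      have : -E₀ ≤ f t - g t := by linarith
      have := mul_le_mul_of_nonneg_left this he.le
      simp only [hφ]; nlinarith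
    have := setIntegral_mono_on ((hIexp.const_mul E₀).neg) hI3 measurableSet_Ioi hmono
    calc -(E₀ * (Real.exp (-lam * b) / lam))
        = ∫ t in Set.Ioi b, -(E₀ * Real.exp (-lam * t)) := by
          rw [integral_neg, integral_const_mul, integral_exp_neg_mul_Ioi hlam0 b]
      _ ≤ ∫ t in Set.Ioi b, φ t := this
  rw [hIci, hsplit, hp1]
  have hexp_pos : 0 < Real.exp (-lam * b) := Real.exp_pos _
  have hkey : E₀ * (Real.exp (-lam * b) / lam) < Real.exp (-lam * b) * m := by
    rw [mul_div_assoc'] at *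
    rw [div_lt_iff₀ hlam0]
    have h2 : E₀ < m * lam := by
      have := (div_lt_iff₀ hlam0).1 hlamE; linarith
    calc E₀ * Real.exp (-lam * b) < (m * lam) * Real.exp (-lam * b) := by
          exact mul_lt_mul_of_pos_right h2 hexp_pos
      _ = Real.exp (-lam * b) * m * lam := by ring
  linarith
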